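/- The determinant of the s×s matrix M(λ) with M_{11} = 5 - λ, M_{ii} = 2 - λ for 2 ≤ i ≤ s, M_{i,i+1} = M_{i+1,i} = -1, M_{1s} = M_{s1} = -2, and zeros elsewhere, equals (5-λ)·U_{s-1}((2-λ)/2) - 5·U_{s-2}((2-λ)/2) - 4, where U_n denotes the Chebyshev polynomial of the second kind. -/

import Mathlib

open Matrix Polynomial

namespace DetMAux

lemma coe_succAbove {n : ℕ} (p : Fin (n+1)) (j : Fin n) :
    ((p.succAbove j) : ℕ) = if (j:ℕ) < (p:ℕ) then (j:ℕ) else (j:ℕ)+1 := by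
  rw [Fin.succAbove]
  split_ifs with h1 h2 h2 <;>
    simp_all [Fin.lt_def, Fin.coe_castSucc, Fin.val_succ]

noncomputable def T (x : ℝ) (n : ℕ) : Matrix (Fin n) (Fin n) ℝ :=
  Matrix.of fun i j =>
    if (i:ℕ) = (j:ℕ) then 2*x
    else if (i:ℕ)+1 = (j:ℕ) ∨ (j:ℕ)+1 = (i:ℕ) then -1 else 0

noncomputable def Mc (x : ℝ) (n : ℕ) : Matrix (Fin n) (Fin n) ℝ :=
  Matrix.of fun i j =>
    if (i:ℕ) = 0 ∧ (j:ℕ) = 0 then 2*x+3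
    else if (i:ℕ) = (j:ℕ) then 2*x
    else if (i:ℕ)+1 = (j:ℕ) ∨ (j:ℕ)+1 = (i:ℕ) then -1
    else if ((i:ℕ) = 0 ∧ (j:ℕ)+1 = n) ∨ ((i:ℕ)+1 = n ∧ (j:ℕ) = 0) then -2
    else 0

lemma det_upper {n : ℕ} (C : Matrix (Fin n) (Fin n) ℝ)
    (h0 : ∀ i j : Fin n, (j:ℕ) < (i:ℕ) → C i j = 0) (hd : ∀ i, C i i = -1) :
    C.det = (-1)^n := by
  rw [Matrix.det_of_upperTriangular (fun i j h => h0 i j h)]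
  rw [Finset.prod_congr rfl (fun i _ => hd i), Finset.prod_const, Finset.card_univ,
    Fintype.card_fin]

lemma det_lower {n : ℕ} (C : Matrix (Fin n) (Fin n) ℝ)
    (h0 : ∀ i j : Fin n, (i:ℕ) < (j:ℕ) → C i j = 0) (hd : ∀ i, C i i = -1) :
    C.det = (-1)^n := by
  rw [← Matrix.det_transpose]
  exact det_upper _ (fun i j h => h0 j i h) (fun i => hd i)

-- ==== A-series (minor at column 1) ====
lemma eA0 (x : ℝ) (n : ℕ) :
    ((Mc x (n+3)).submatrix Fin.succ (Fin.succAbove 1)) 0 0 = -1 := by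
  simp only [submatrix_apply, Mc, of_apply, Fin.val_succ, coe_succAbove,
    Fin.val_zero, Fin.val_one]
  norm_num

lemma eAl (x : ℝ) (n : ℕ) :
    ((Mc x (n+3)).submatrix Fin.succ (Fin.succAbove 1)) (Fin.last n).succ 0 = -2 := by
  simp only [submatrix_apply, Mc, of_apply, Fin.val_succ, coe_succAbove,
    Fin.val_zero, Fin.val_one, Fin.val_last]
  split_ifs <;> first | rfl | omega | (exfalso; omega) | (rename_i h; rcases h with h|h <;> (exfalso; omega)) | (simp_all; done) | (simp_all; omega)

lemma eAz (x : ℝ) (n : ℕ) (b : Fin (n+1)) (hbn : (b:ℕ) ≠ n) :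
    ((Mc x (n+3)).submatrix Fin.succ (Fin.succAbove 1)) b.succ 0 = 0 := by
  have hblt : (b:ℕ) < n+1 := b.isLt
  simp only [submatrix_apply, Mc, of_apply, Fin.val_succ, coe_succAbove,
    Fin.val_zero, Fin.val_one]
  split_ifs <;> first | rfl | omega | (exfalso; omega) | (rename_i h; rcases h with h|h <;> (exfalso; omega)) | (simp_all; done) | (simp_all; omega)

lemma mA0 (x : ℝ) (n : ℕ) :
    ((((Mc x (n+3)).submatrix Fin.succ (Fin.succAbove 1))).submatrix
      (Fin.succAbove 0) Fin.succ) = T x (n+1) := by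
  ext i j
  simp only [submatrix_apply, T, Mc, of_apply, Fin.val_succ, Fin.succAbove_zero,
    coe_succAbove, Fin.val_one]
  split_ifs <;> first | rfl | omega | (exfalso; omega) | (rename_i h; rcases h with h|h <;> (exfalso; omega)) | (simp_all; done) | (simp_all; omega)

lemma mAl (x : ℝ) (n : ℕ) :
    ((((Mc x (n+3)).submatrix Fin.succ (Fin.succAbove 1))).submatrix
      (Fin.succAbove (Fin.last n).succ) Fin.succ).det = (-1:ℝ)^(n+1) := by
  rw [Fin.succ_last, Fin.succAbove_last]
  apply det_lower
  · intro i j hij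
    simp only [submatrix_apply, Mc, of_apply, Fin.val_succ, coe_succAbove,
      Fin.coe_castSucc, Fin.val_one]
    split_ifs <;> first | rfl | omega | (exfalso; omega) | (rename_i h; rcases h with h|h <;> (exfalso; omega)) | (simp_all; done) | (simp_all; omega) | (simp_all; split_ifs <;> first | rfl | (exfalso; omega))
  · intro i
    simp only [submatrix_apply, Mc, of_apply, Fin.val_succ, coe_succAbove,
      Fin.coe_castSucc, Fin.val_one]
    split_ifs <;> first | rfl | omega | (exfalso; omega) | (rename_i h; rcases h with h|h <;> (exfalso; omega)) | (simp_all; done) | (simp_all; omega)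

-- ==== B-series (minor at last column) ====
lemma eB0 (x : ℝ) (n : ℕ) :
    ((Mc x (n+3)).submatrix Fin.succ Fin.castSucc) 0 0 = -1 := by
  simp only [submatrix_apply, Mc, of_apply, Fin.val_succ, Fin.coe_castSucc, Fin.val_zero]
  norm_num

lemma eBl (x : ℝ) (n : ℕ) :
    ((Mc x (n+3)).submatrix Fin.succ Fin.castSucc) (Fin.last n).succ 0 = -2 := by
  simp only [submatrix_apply, Mc, of_apply, Fin.val_succ, Fin.coe_castSucc,
    Fin.val_zero, Fin.val_last]
  split_ifs <;> first | rfl | omega | (exfalso; omega) | (rename_i h; rcases h with h|h <;> (exfalso; omega)) | (simp_all; done) | (simp_all; omega)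

lemma eBz (x : ℝ) (n : ℕ) (b : Fin (n+1)) (hbn : (b:ℕ) ≠ n) :
    ((Mc x (n+3)).submatrix Fin.succ Fin.castSucc) b.succ 0 = 0 := by
  have hblt : (b:ℕ) < n+1 := b.isLt
  simp only [submatrix_apply, Mc, of_apply, Fin.val_succ, Fin.coe_castSucc, Fin.val_zero]
  split_ifs <;> first | rfl | omega | (exfalso; omega) | (rename_i h; rcases h with h|h <;> (exfalso; omega)) | (simp_all; done) | (simp_all; omega)

lemma mB0 (x : ℝ) (n : ℕ) :
    ((((Mc x (n+3)).submatrix Fin.succ Fin.castSucc)).submatrix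
      (Fin.succAbove 0) Fin.succ).det = (-1:ℝ)^(n+1) := by
  rw [Fin.succAbove_zero]
  apply det_upper
  · intro i j hij
    simp only [submatrix_apply, Mc, of_apply, Fin.val_succ, Fin.coe_castSucc]
    split_ifs <;> first | rfl | omega | (exfalso; omega) | (rename_i h; rcases h with h|h <;> (exfalso; omega)) | (simp_all; done) | (simp_all; omega)
  · intro i
    simp only [submatrix_apply, Mc, of_apply, Fin.val_succ, Fin.coe_castSucc]
    split_ifs <;> first | rfl | omega | (exfalso; omega) | (rename_i h; rcases h with h|h <;> (exfalso; omega)) | (simp_all; done) | (simp_all; omega)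

lemma mBl (x : ℝ) (n : ℕ) :
    (((Mc x (n+3)).submatrix Fin.succ Fin.castSucc)).submatrix
      (Fin.succAbove (Fin.last n).succ) Fin.succ = T x (n+1) := by
  rw [Fin.succ_last, Fin.succAbove_last]
  ext i j
  simp only [submatrix_apply, T, Mc, of_apply, Fin.val_succ, Fin.coe_castSucc]
  split_ifs <;> first | rfl | omega | (exfalso; omega) | (rename_i h; rcases h with h|h <;> (exfalso; omega)) | (simp_all; done) | (simp_all; omega)

-- ==== row-0 entries of Mc ====
lemma e00 (x : ℝ) (n : ℕ) : Mc x (n+3) 0 0 = 2*x+3 := by simp [Mc]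

lemma e01 (x : ℝ) (n : ℕ) : Mc x (n+3) 0 (Fin.succ 0) = -1 := by
  simp only [Mc, of_apply, Fin.val_zero, Fin.val_succ, Fin.succ_zero_eq_one, Fin.val_one]
  norm_num

lemma e0l (x : ℝ) (n : ℕ) : Mc x (n+3) 0 (Fin.last n).succ.succ = -2 := by
  simp only [Mc, of_apply, Fin.val_zero, Fin.val_succ, Fin.val_last]
  split_ifs <;> first | rfl | omega | (exfalso; omega) | (rename_i h; rcases h with h|h <;> (exfalso; omega)) | (simp_all; done) | (simp_all; omega)

lemma e0z (x : ℝ) (n : ℕ) (b : Fin (n+1)) (hbn : (b:ℕ) ≠ n) :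
    Mc x (n+3) 0 b.succ.succ = 0 := by
  have hblt : (b:ℕ) < n+1 := b.isLt
  simp only [Mc, of_apply, Fin.val_zero, Fin.val_succ]
  split_ifs <;> first | rfl | omega | (exfalso; omega) | (rename_i h; rcases h with h|h <;> (exfalso; omega)) | (simp_all; done) | (simp_all; omega)

lemma m0main (x : ℝ) (n : ℕ) :
    (Mc x (n+3)).submatrix Fin.succ (Fin.succAbove 0) = T x (n+2) := by
  rw [Fin.succAbove_zero]
  ext i j
  simp only [submatrix_apply, T, Mc, of_apply, Fin.val_succ]
  split_ifs <;> first | rfl | omega | (exfalso; omega) | (rename_i h; rcases h with h|h <;> (exfalso; omega)) | (simp_all; done) | (simp_all; omega)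

lemma T_sub1 (x : ℝ) (n : ℕ) :
    (T x (n+1)).submatrix Fin.succ Fin.succ = T x n := by
  ext i j
  simp only [submatrix_apply, T, of_apply, Fin.val_succ]
  split_ifs <;> first | rfl | omega

lemma detT (x : ℝ) : ∀ n, (T x n).det = (Polynomial.Chebyshev.U ℝ (n:ℤ)).eval x
  | 0 => by simp [Matrix.det_fin_zero, Polynomial.Chebyshev.U_zero]
  | 1 => by
      simp [Matrix.det_fin_one, T, Polynomial.Chebyshev.U_one]
  | (n+2) => by
      have h1 := detT x (n+1)
      have h0 := detT x n
      rw [Matrix.det_succ_row_zero, Fin.sum_univ_succ, Fin.sum_univ_succ]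
      have hz : ∀ j : Fin n,
          (-1:ℝ) ^ ((j.succ.succ : Fin (n+2)) : ℕ) * T x (n+2) 0 j.succ.succ *
            ((T x (n+2)).submatrix Fin.succ (Fin.succAbove j.succ.succ)).det = 0 := by
        intro j
        have : T x (n+2) 0 j.succ.succ = 0 := by
          simp only [T, of_apply, Fin.val_succ, Fin.val_zero]
          split_ifs <;> first | rfl | simp_all | omega
        rw [this]; ring
      rw [Finset.sum_eq_zero (fun j _ => hz j)]
      have e00 : T x (n+2) 0 0 = 2*x := by simp [T]
      have e01 : T x (n+2) 0 1 = -1 := by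
        simp only [T, of_apply, Fin.val_zero, Fin.val_one]
        norm_num
      have m0 : (T x (n+2)).submatrix Fin.succ (Fin.succAbove 0) = T x (n+1) := by
        rw [Fin.succAbove_zero]; exact T_sub1 x (n+1)
      have m1 : ((T x (n+2)).submatrix Fin.succ (Fin.succAbove 1)).det
          = - (T x n).det := by
        rw [Matrix.det_succ_column_zero, Fin.sum_univ_succ]
        have hz2 : ∀ i : Fin n,
            (-1:ℝ) ^ ((i.succ : Fin (n+1)) : ℕ) *
              ((T x (n+2)).submatrix Fin.succ (Fin.succAbove 1)) i.succ 0 *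
              ((((T x (n+2)).submatrix Fin.succ (Fin.succAbove 1))).submatrix
                (Fin.succAbove i.succ) Fin.succ).det = 0 := by
          intro i
          have : ((T x (n+2)).submatrix Fin.succ (Fin.succAbove 1)) i.succ 0 = 0 := by
            simp only [submatrix_apply, T, of_apply, Fin.val_succ, coe_succAbove,
              Fin.val_zero, Fin.val_one]
            split_ifs <;> first | rfl | simp_all | omega
          rw [this]; ring
        rw [Finset.sum_eq_zero (fun i _ => hz2 i)]
        have eA0 : ((T x (n+2)).submatrix Fin.succ (Fin.succAbove 1)) 0 0 = -1 := by
          simp only [submatrix_apply, T, of_apply, Fin.val_succ, coe_succAbove,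
            Fin.val_zero, Fin.val_one]
          norm_num
        have mm : (((T x (n+2)).submatrix Fin.succ (Fin.succAbove 1))).submatrix
            (Fin.succAbove 0) Fin.succ = T x n := by
          ext i j
          simp only [submatrix_apply, T, of_apply, Fin.val_succ, Fin.succAbove_zero,
            coe_succAbove, Fin.val_one]
          split_ifs <;> first | rfl | simp_all | omega
        rw [eA0, mm]
        norm_num
      simp only [Fin.succ_zero_eq_one]
      rw [e00, e01, m0, m1, h1, h0]
      have hU : (Polynomial.Chebyshev.U ℝ ((((n:ℕ)+2 : ℕ)):ℤ)) =
          2 * Polynomial.X * Polynomial.Chebyshev.U ℝ (((n+1 : ℕ)):ℤ)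
            - Polynomial.Chebyshev.U ℝ (n:ℤ) := by
        push_cast
        exact Polynomial.Chebyshev.U_add_two ℝ (n:ℤ)
      rw [hU]
      simp only [Fin.val_zero, Fin.val_one, Fin.val_succ, pow_one, pow_zero, Polynomial.eval_sub, Polynomial.eval_mul,
        Polynomial.eval_ofNat, Polynomial.eval_X]
      push_cast
      ring


set_option maxHeartbeats 800000 in
lemma detMc (x : ℝ) (n : ℕ) :
    (Mc x (n+3)).det = (2*x+3) * (Polynomial.Chebyshev.U ℝ ((n:ℤ)+2)).eval x
      - 5 * (Polynomial.Chebyshev.U ℝ ((n:ℤ)+1)).eval x - 4 := by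
  have detA : ((Mc x (n+3)).submatrix Fin.succ (Fin.succAbove 1)).det
      = -(T x (n+1)).det - 2 * ((-1:ℝ)^(n+1) * (-1:ℝ)^(n+1)) := by
    rw [Matrix.det_succ_column_zero, Fin.sum_univ_succ]
    rw [Finset.sum_eq_single (Fin.last n)]
    · rw [eA0, eAl, mA0, mAl]
      simp only [Fin.val_zero, Fin.val_succ, Fin.val_last, pow_zero]
      ring
    · intro b _ hb
      have hbn : (b:ℕ) ≠ n := fun h => hb (Fin.ext (by simpa [Fin.val_last] using h))
      rw [eAz x n b hbn]; ring
    · intro h; exact absurd (Finset.mem_univ _) h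
  have detB : ((Mc x (n+3)).submatrix Fin.succ
        (Fin.succAbove ((Fin.last n).succ.succ))).det
      = -(-1:ℝ)^(n+1) - 2 * ((-1:ℝ)^(n+1) * (T x (n+1)).det) := by
    rw [Fin.succ_last, Fin.succ_last, Fin.succAbove_last]
    rw [Matrix.det_succ_column_zero, Fin.sum_univ_succ]
    rw [Finset.sum_eq_single (Fin.last n)]
    · rw [eB0, eBl, mB0, mBl]
      simp only [Fin.val_zero, Fin.val_succ, Fin.val_last, pow_zero]
      ring
    · intro b _ hb
      have hbn : (b:ℕ) ≠ n := fun h => hb (Fin.ext (by simpa [Fin.val_last] using h))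
      rw [eBz x n b hbn]; ring
    · intro h; exact absurd (Finset.mem_univ _) h
  rw [Matrix.det_succ_row_zero, Fin.sum_univ_succ, Fin.sum_univ_succ]
  rw [Finset.sum_eq_single (Fin.last n)]
  · have e01v : Mc x (n+3) 0 1 = -1 := by
      rw [← Fin.succ_zero_eq_one]; exact e01 x n
    rw [Fin.succ_zero_eq_one, e00, e01v, e0l, m0main, detA, detB]
    rw [detT x (n+1), detT x (n+2)]
    have hp : ((-1:ℝ))^(n+1) * ((-1:ℝ))^(n+1) = 1 := by
      rw [← pow_add]; exact Even.neg_one_pow ⟨n+1, by ring⟩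
    have hq : ((-1:ℝ))^(((Fin.last n).succ.succ : Fin (n+3)) : ℕ)
        = -((-1:ℝ))^(n+1) := by
      simp only [Fin.val_succ, Fin.val_last, pow_succ]
      ring
    rw [hq]
    have hc1 : (((n+1 : ℕ)):ℤ) = (n:ℤ)+1 := by push_cast; ring
    have hc2 : (((n+2 : ℕ)):ℤ) = (n:ℤ)+2 := by push_cast; ring
    rw [hc1, hc2]
    simp only [Fin.val_zero, Fin.val_one, pow_zero, pow_one]
    set u1 := (Polynomial.Chebyshev.U ℝ ((n:ℤ)+1)).eval x
    set u2 := (Polynomial.Chebyshev.U ℝ ((n:ℤ)+2)).eval x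
    set p := ((-1:ℝ))^(n+1)
    have h2n : ((-1:ℝ))^(n*2) = 1 := by
      rw [mul_comm, pow_mul, neg_one_sq, one_pow]
    linear_combination (2 + 4*u1) * hp - (6 + 8*u1) * h2n
  · intro b _ hb
    have hbn : (b:ℕ) ≠ n := fun h => hb (Fin.ext (by simpa [Fin.val_last] using h))
    rw [e0z x n b hbn]; ring
  · intro h; exact absurd (Finset.mem_univ _) h

end DetMAux

/-- The determinant of the matrix `M(λ)` equals
`(5-λ)·U_{s-1}((2-λ)/2) - 5·U_{s-2}((2-λ)/2) - 4`, where `U_n` is the Chebyshev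
polynomial of the second kind. -/
theorem det_M_chebyshev (s : ℕ) (hs : 3 ≤ s) (lam : ℝ)
    (M : Matrix (Fin s) (Fin s) ℝ)
    (hM : ∀ i j, M i j =
      if (i : ℕ) = 0 ∧ (j : ℕ) = 0 then 5 - lam
      else if i = j then 2 - lam
      else if (i : ℕ) + 1 = (j : ℕ) ∨ (j : ℕ) + 1 = (i : ℕ) then -1
      else if ((i : ℕ) = 0 ∧ (j : ℕ) + 1 = s) ∨ ((i : ℕ) + 1 = s ∧ (j : ℕ) = 0) then -2
      else 0) :
    M.det = (5 - lam) * (Polynomial.Chebyshev.U ℝ (s - 1 : ℤ)).eval ((2 - lam) / 2)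
      - 5 * (Polynomial.Chebyshev.U ℝ (s - 2 : ℤ)).eval ((2 - lam) / 2) - 4 := by
  obtain ⟨n, rfl⟩ : ∃ n, s = n + 3 := ⟨s - 3, by omega⟩
  have hMeq : M = DetMAux.Mc ((2-lam)/2) (n+3) := by
    ext i j
    rw [hM i j]
    simp only [DetMAux.Mc, Matrix.of_apply]
    simp only [Fin.ext_iff]
    split_ifs <;> ring
  rw [hMeq, DetMAux.detMc]
  have h1 : ((n+3 : ℕ) : ℤ) - 1 = (n:ℤ)+2 := by push_cast; ring
  have h2 : ((n+3 : ℕ) : ℤ) - 2 = (n:ℤ)+1 := by push_cast; ring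
  rw [h1, h2]
  ring
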